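/- arXiv:2403.19619 — 3 statements merged into one kernel-verified Lean document; each statement's English description precedes it below -/
import Mathlib

section
/- Let V and V' be finite-dimensional real inner product spaces with dim V = m, and let B : V' → V be a surjective linear map. Let ω_V be the Riemannian volume form on V and ω_⊥ the volume form on (ker B)^⊥ ⊆ V'. Then the pullback of ω_V along the restriction of B to (ker B)^⊥ equals ±√(det(B B^T)) · ω_⊥. -/
open Module

/-- `B ∘ adjoint B = C ∘ adjoint C` where `C` is the restriction of `B` to `(ker B)ᗮ`. -/
lemma aux_comp_adjoint {V V' : Type*} [NormedAddCommGroup V] [InnerProductSpace ℝ V]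
    [NormedAddCommGroup V'] [InnerProductSpace ℝ V']
    [FiniteDimensional ℝ V] [FiniteDimensional ℝ V'] (B : V' →ₗ[ℝ] V) :
    (B ∘ₗ ((LinearMap.ker B)ᗮ : Submodule ℝ V').subtype) ∘ₗ
      (LinearMap.adjoint (B ∘ₗ ((LinearMap.ker B)ᗮ : Submodule ℝ V').subtype))
      = B ∘ₗ (LinearMap.adjoint B) := by
  have hmem : ∀ v : V, LinearMap.adjoint B v ∈ (LinearMap.ker B)ᗮ := by
    intro v k hk
    rw [real_inner_comm, LinearMap.adjoint_inner_left]
    simp [LinearMap.mem_ker.mp hk]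
  ext v
  have h1 : LinearMap.adjoint (B ∘ₗ ((LinearMap.ker B)ᗮ : Submodule ℝ V').subtype) v
      = LinearMap.adjoint ((LinearMap.ker B)ᗮ : Submodule ℝ V').subtype
          (LinearMap.adjoint B v) := by
    rw [LinearMap.adjoint_comp]; rfl
  have h2 : LinearMap.adjoint ((LinearMap.ker B)ᗮ : Submodule ℝ V').subtype
      (LinearMap.adjoint B v) = ⟨LinearMap.adjoint B v, hmem v⟩ := by
    apply ext_inner_right ℝ
    intro w
    rw [LinearMap.adjoint_inner_left]
    simp [Submodule.coe_inner]
  simp only [LinearMap.comp_apply, h1, h2, Submodule.subtype_apply]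

/-- Let `V` and `V'` be finite-dimensional real inner product spaces with
`dim V = m`, and let `B : V' → V` be a surjective linear map. Let `ω_V` be the Riemannian
volume form on `V` (w.r.t. an orientation `o`) and `ω_⊥` the volume form on `(ker B)ᗮ ⊆ V'`
(w.r.t. an orientation `o'`). Then the pullback of `ω_V` along the restriction of `B` to
`(ker B)ᗮ` equals `± √(det (B Bᵀ)) • ω_⊥`. -/
theorem stmt_0
    {V V' : Type*} [NormedAddCommGroup V] [InnerProductSpace ℝ V]
    [NormedAddCommGroup V'] [InnerProductSpace ℝ V']
    [FiniteDimensional ℝ V] [FiniteDimensional ℝ V']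
    {m : ℕ} [Fact (Module.finrank ℝ V = m)]
    (B : V' →ₗ[ℝ] V) (hB : Function.Surjective B)
    [Fact (Module.finrank ℝ ((LinearMap.ker B)ᗮ : Submodule ℝ V') = m)]
    (o : Orientation ℝ V (Fin m))
    (o' : Orientation ℝ ((LinearMap.ker B)ᗮ : Submodule ℝ V') (Fin m)) :
    ∃ ε : ℝ, (ε = 1 ∨ ε = -1) ∧
      (o.volumeForm).compLinearMap (B ∘ₗ ((LinearMap.ker B)ᗮ : Submodule ℝ V').subtype)
        = (ε * Real.sqrt (LinearMap.det (B ∘ₗ (LinearMap.adjoint B)))) • o'.volumeForm := by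
  have hdet : LinearMap.det (B ∘ₗ (LinearMap.adjoint B)) =
      LinearMap.det ((B ∘ₗ ((LinearMap.ker B)ᗮ : Submodule ℝ V').subtype) ∘ₗ
        LinearMap.adjoint (B ∘ₗ ((LinearMap.ker B)ᗮ : Submodule ℝ V').subtype)) := by
    rw [aux_comp_adjoint]
  rcases Nat.eq_zero_or_pos m with hm | hm
  · -- degenerate case `m = 0`
    subst hm
    have hV : finrank ℝ V = 0 := Fact.out
    have hdet0 : LinearMap.det (B ∘ₗ (LinearMap.adjoint B)) = 1 :=
      LinearMap.det_eq_one_of_finrank_eq_zero hV _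
    rcases o.eq_or_eq_neg_of_isEmpty with rfl | rfl <;>
      rcases o'.eq_or_eq_neg_of_isEmpty with rfl | rfl
    · refine ⟨1, Or.inl rfl, ?_⟩
      ext x
      simp [hdet0, Orientation.volumeForm_zero_pos]
    · refine ⟨-1, Or.inr rfl, ?_⟩
      ext x
      simp [hdet0, Orientation.volumeForm_zero_pos, Orientation.volumeForm_zero_neg]
    · refine ⟨-1, Or.inr rfl, ?_⟩
      ext x
      simp [hdet0, Orientation.volumeForm_zero_pos, Orientation.volumeForm_zero_neg]
    · refine ⟨1, Or.inl rfl, ?_⟩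
      ext x
      simp [hdet0, Orientation.volumeForm_zero_neg]
  · -- main case `0 < m`
    have hVm : finrank ℝ V = m := Fact.out
    have hWm : finrank ℝ ((LinearMap.ker B)ᗮ : Submodule ℝ V') = m := Fact.out
    let C : ((LinearMap.ker B)ᗮ : Submodule ℝ V') →ₗ[ℝ] V :=
      B ∘ₗ ((LinearMap.ker B)ᗮ : Submodule ℝ V').subtype
    let f : OrthonormalBasis (Fin m) ℝ V := o.finOrthonormalBasis hm hVm
    let e : OrthonormalBasis (Fin m) ℝ ((LinearMap.ker B)ᗮ : Submodule ℝ V') :=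
      o'.finOrthonormalBasis hm hWm
    have hf : o.volumeForm = f.toBasis.det :=
      o.volumeForm_robust f (o.finOrthonormalBasis_orientation hm hVm)
    have he : o'.volumeForm = e.toBasis.det :=
      o'.volumeForm_robust e (o'.finOrthonormalBasis_orientation hm hWm)
    set M : Matrix (Fin m) (Fin m) ℝ := LinearMap.toMatrix e.toBasis f.toBasis C with hM
    have hMc : f.toBasis.det (fun i => C (e.toBasis i)) = M.det := by
      rw [Basis.det_apply]
      congr 1
      ext i j
      rw [Basis.toMatrix_apply, hM, LinearMap.toMatrix_apply]
    have hdet2 : LinearMap.det (B ∘ₗ (LinearMap.adjoint B)) = M.det ^ 2 := by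
      rw [hdet, ← LinearMap.det_toMatrix f.toBasis, LinearMap.toMatrix_comp _ e.toBasis,
        LinearMap.toMatrix_adjoint e f, ← hM, Matrix.det_mul, Matrix.det_conjTranspose,
        star_trivial, sq]
    have hsqrt : Real.sqrt (LinearMap.det (B ∘ₗ (LinearMap.adjoint B))) = |M.det| := by
      rw [hdet2, Real.sqrt_sq_eq_abs]
    refine ⟨if 0 ≤ M.det then 1 else -1, by split <;> simp, ?_⟩
    have key : (if 0 ≤ M.det then (1:ℝ) else -1) * |M.det| = M.det := by
      split_ifs with h
      · rw [one_mul, abs_of_nonneg h]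
      · rw [neg_one_mul, abs_of_neg (lt_of_not_ge h), neg_neg]
    rw [hsqrt, key, hf, he]
    have hsm := (f.toBasis.det.compLinearMap C).eq_smul_basis_det e.toBasis
    rw [hsm]
    congr 1
end

section
/- Let G be a Lie group with a left-invariant metric, E : G → M as above, ℓ : M → G a smooth section of E with ℓ(z) = e, and for x ∈ M let R_{ℓ(x)} be right multiplication. Define c(ξ) by dR_{ℓ(x)}^*(ω_Ker(ξ)) = c(ξ)·ω_Ker(ξ ℓ(x)^{-1}) where x = E(ξ). Then c is constant on every fiber E^{-1}(x); i.e., c(sξ) = c(ξ) for all s ∈ G^z. -/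
/-- Let `G` be a Lie group with a left-invariant metric, `E = μ(z,·)` the
orbit map, `ℓ : M → G` a smooth section of `E` with `ℓ(z) = e`, and for `x ∈ M` let
`R_{ℓ(x)}` be right multiplication, whose left trivialization is a linear map
`A(x) : 𝔤 → 𝔤`. Define `c(ξ)` by `dR_{ℓ(x)}^*(ω_Ker(ξ)) = c(ξ) • ω_Ker(ξ ℓ(x)⁻¹)` where
`x = E(ξ)`. If `ω_Ker` is invariant under left multiplication by the stabilizer `G^z`
(and nowhere zero), then `c` is constant on every fiber `E⁻¹(x)`: `c(sξ) = c(ξ)` for all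
`s ∈ G^z`. -/
theorem stmt_17
    {𝔤 : Type*} [NormedAddCommGroup 𝔤] [InnerProductSpace ℝ 𝔤] [FiniteDimensional ℝ 𝔤]
    {G : Type*} [Group G] {M : Type*}
    (μ : M → G → M)
    (hone : ∀ x, μ x 1 = x)
    (hmul : ∀ x ξ η, μ (μ x ξ) η = μ x (ξ * η))
    (z : M)
    (p : ℕ)
    -- the fiberwise volume form `ω_Ker` (in left trivialization), nowhere zero
    (ω : G → (𝔤 [⋀^Fin p]→ₗ[ℝ] ℝ))
    (hne : ∀ ξ : G, ω ξ ≠ 0)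
    -- invariance of `ω_Ker` under left multiplication by `G^z` (Statement 16)
    (hinv : ∀ s : G, μ z s = z → ∀ ξ : G, ω (s * ξ) = ω ξ)
    -- a section `ℓ` of `E = μ(z,·)` with `ℓ(z) = e`
    (ℓ : M → G)
    (hℓ : ∀ x : M, μ z (ℓ x) = x)
    (hℓz : ℓ z = 1)
    -- `A(x)` is the left trivialization of right multiplication by `ℓ(x)`
    (A : M → (𝔤 →ₗ[ℝ] 𝔤))
    -- the defining property of the scaling function `c` :
    -- `dR_{ℓ(x)}^* (ω_Ker(ξ)) = c(ξ) • ω_Ker(ξ ℓ(x)⁻¹)` with `x = E(ξ)`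
    (c : G → ℝ)
    (hc : ∀ ξ : G,
      (ω ξ).compLinearMap (A (μ z ξ)) = c ξ • ω (ξ * (ℓ (μ z ξ))⁻¹)) :
    ∀ s : G, μ z s = z → ∀ ξ : G, c (s * ξ) = c ξ := by
  intro s hs ξ
  have hm : μ z (s * ξ) = μ z ξ := by rw [← hmul, hs]
  have h1 := hc (s * ξ)
  have h2 := hc ξ
  rw [hm, hinv s hs ξ, mul_assoc, hinv s hs (ξ * (ℓ (μ z ξ))⁻¹), h2] at h1
  have := sub_eq_zero.mpr h1.symm
  rw [show c (s * ξ) • ω (ξ * (ℓ (μ z ξ))⁻¹) - c ξ • ω (ξ * (ℓ (μ z ξ))⁻¹) = (c (s * ξ) - c ξ) • ω (ξ * (ℓ (μ z ξ))⁻¹) from (sub_smul _ _ _).symm, smul_eq_zero] at this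
  rcases this with h | h
  · linarith [sub_eq_zero.mp h]
  · exact absurd h (hne _)
end

section
/- Let G̃ be a fundamental solution of a left-invariant operator L̃ on a Lie group G with left Haar measure ω_G, assumed unique (so that it satisfies G̃(gξ, gη) = G̃(ξ,η) for all g). Fix a surjection E : G → M as orbit map of a transitive right action with stabilizer G^z, and suppose the fiberwise volume form ω_Ker on E-fibers is invariant under left multiplication by G^z. Then for x,y ∈ M with x ≠ y, the saturated integral ∫_{E^{-1}(y)} G̃(ξ, η) ω_Ker(η) is independent of the choice of ξ ∈ E^{-1}(x). -/
open MeasureTheory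

/-- Let `Γ̃` be a fundamental solution of a left-invariant operator on a
Lie group `G`, assumed unique, so that it is left-invariant: `Γ̃(gξ, gη) = Γ̃(ξ,η)` for all
`g`. Fix a surjection `E : G → M`, `E(ξ) = μ(z,ξ)`, as orbit map of a transitive right
action with stabilizer `G^z`, and suppose the fiberwise volume measure `ν(y)` on the
`E`-fibers (corresponding to `ω_Ker`) is invariant under left multiplication by `G^z`.
Then, for `x, y ∈ M` with `x ≠ y`, the saturated integral `∫_{E⁻¹(y)} Γ̃(ξ, η) dν(y)(η)`
is independent of the choice of `ξ ∈ E⁻¹(x)`. -/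
theorem stmt_18
    {G : Type*} [Group G] [MeasurableSpace G] [MeasurableMul G]
    {M : Type*}
    (μ : M → G → M)
    (hone : ∀ x, μ x 1 = x)
    (hmul : ∀ x ξ η, μ (μ x ξ) η = μ x (ξ * η))
    (htrans : ∀ x y : M, ∃ g : G, μ x g = y)
    (z : M)
    -- the left-invariant fundamental solution
    (Γ : G → G → ℝ)
    (hΓ : ∀ g ξ η : G, Γ (g * ξ) (g * η) = Γ ξ η)
    -- the fiberwise measures `ν y` on the fibers `E⁻¹(y)` induced by `ω_Ker`
    (ν : M → Measure G)
    (hsupp : ∀ y : M, ∀ᵐ η ∂(ν y), μ z η = y)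
    -- invariance of the fiber measure under left multiplication by `G^z`
    (hν : ∀ y : M, ∀ s : G, μ z s = z → (ν y).map (fun η => s * η) = ν y)
    -- integrability along the fibers
    (hint : ∀ (x y : M) (ξ : G), μ z ξ = x → Integrable (fun η => Γ ξ η) (ν y))
    (x y : M) (hxy : x ≠ y)
    (ξ ξ' : G) (hξ : μ z ξ = x) (hξ' : μ z ξ' = x) :
    ∫ η, Γ ξ η ∂(ν y) = ∫ η, Γ ξ' η ∂(ν y) := by
  set s : G := ξ' * ξ⁻¹ with hs
  have hsz : μ z s = z := by
    have h1 : μ x ξ⁻¹ = z := by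
      rw [← hξ, hmul, mul_inv_cancel, hone]
    calc μ z s = μ (μ z ξ') ξ⁻¹ := by rw [hmul]
    _ = z := by rw [hξ', h1]
  have hmap := hν y s hsz
  have hΓeq : ∀ η, Γ ξ' (s * η) = Γ ξ η := by
    intro η
    have : Γ (s * ξ) (s * η) = Γ ξ η := hΓ s ξ η
    simpa [hs, mul_assoc] using this
  have hmeas : Measurable fun η : G => s * η := measurable_const_mul s
  have hint' : Integrable (fun η => Γ ξ' η) (ν y) := hint x y ξ' hξ'
  calc ∫ η, Γ ξ η ∂(ν y) = ∫ η, Γ ξ' (s * η) ∂(ν y) := by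
        simp_rw [hΓeq]
  _ = ∫ η, Γ ξ' η ∂((ν y).map fun η => s * η) := by
        rw [integral_map hmeas.aemeasurable]
        rw [hmap]; exact hint'.1
  _ = ∫ η, Γ ξ' η ∂(ν y) := by rw [hmap]
end
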